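/- arXiv:1510.05132 — 2 statements merged into one kernel-verified Lean document; each statement's English description precedes it below -/
import Mathlib

section
/- Let f be holomorphic on the closed unit disk with f(z) = Σ_{k≥0} a_k z^k, and I₀f(β,α) = ∫₀^{2cos α} f(e^{iβ}(1 − t e^{iα})) dt. Then I₀f(β,α) = Σ_{k≥0} ((−1)^k a_k/(k+1)) e^{ikβ}(e^{i(2k+1)α} + (−1)^k e^{−iα}). -/
open Real Complex intervalIntegral

/-- If `f` is holomorphic on the closed unit disk with `f(z) = Σ_{k≥0} a_k z^k`, then in
fan-beam coordinates, `I₀f(β,α) = ∫₀^{2cos α} f(e^{iβ}(1 − t e^{iα})) dt` equals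
`Σ_{k≥0} ((−1)^k a_k/(k+1)) e^{ikβ}(e^{i(2k+1)α} + (−1)^k e^{−iα})`. -/
theorem I0_holomorphic_expansion (f : ℂ → ℂ) (a : ℕ → ℂ)
    (hf : ∀ z : ℂ, ‖z‖ ≤ 1 → HasSum (fun k : ℕ => a k * z ^ k) (f z)) (β α : ℝ)
    (hα : α ∈ Set.Ioo (-(π / 2)) (π / 2)) :
    HasSum
      (fun k : ℕ =>
        ((-1 : ℂ) ^ k * a k / ((k : ℂ) + 1)) * Complex.exp (Complex.I * (k : ℂ) * β) *
          (Complex.exp (Complex.I * (2 * (k : ℂ) + 1) * α) +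
            (-1 : ℂ) ^ k * Complex.exp (-Complex.I * α)))
      (∫ t in (0 : ℝ)..(2 * Real.cos α),
        f (Complex.exp (Complex.I * β) * (1 - (t : ℂ) * Complex.exp (Complex.I * α)))) := by
  have hcos : 0 < Real.cos α := Real.cos_pos_of_mem_Ioo hα
  set E : ℂ := Complex.exp (Complex.I * α) with hEdef
  set B : ℂ := Complex.exp (Complex.I * β) with hBdef
  set L : ℝ := 2 * Real.cos α with hLdef
  have hL0 : (0:ℝ) ≤ L := by positivity
  have hE0 : E ≠ 0 := Complex.exp_ne_zero _
  have hBnorm : ‖B‖ = 1 := by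
    rw [hBdef, Complex.norm_exp]
    simp
  -- key endpoint identity
  have hkey : (L : ℂ) * E = E ^ 2 + 1 := by
    rw [hLdef, hEdef]
    push_cast
    rw [Complex.cos]
    have e1 : Complex.exp (-(α:ℂ)*Complex.I) * Complex.exp (Complex.I*α) = 1 := by
      rw [← Complex.exp_add, show (-(α:ℂ)*Complex.I + Complex.I*α : ℂ) = 0 by ring,
        Complex.exp_zero]
    have e2 : Complex.exp ((α:ℂ)*Complex.I) * Complex.exp (Complex.I*α)
        = Complex.exp (Complex.I*α) ^ 2 := by
      rw [sq, ← Complex.exp_add, ← Complex.exp_add]; ring_nf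
    linear_combination e1 + e2
  -- norm bound on the chord
  have hbound : ∀ t ∈ Set.uIcc (0:ℝ) L, ‖B * ((1:ℂ) - (t:ℂ) * E)‖ ≤ 1 := by
    intro t ht
    rw [Set.uIcc_of_le hL0] at ht
    obtain ⟨h0, h1⟩ := ht
    rw [norm_mul, hBnorm, one_mul]
    have hsq : Complex.normSq ((1 : ℂ) - (t:ℂ) * E)
        = 1 - 2 * t * Real.cos α + t ^ 2 := by
      rw [hEdef, mul_comm Complex.I, Complex.exp_mul_I, Complex.normSq_apply]
      simp [Complex.cos_ofReal_re, Complex.sin_ofReal_re, Complex.cos_ofReal_im,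
        Complex.sin_ofReal_im]
      nlinarith [Real.sin_sq_add_cos_sq α]
    have h1' : t ≤ 2 * Real.cos α := h1
    calc ‖(1 : ℂ) - (t:ℂ) * E‖
        = Real.sqrt (1 - 2 * t * Real.cos α + t ^ 2) := by rw [← hsq]; rfl
      _ ≤ Real.sqrt 1 := Real.sqrt_le_sqrt (by nlinarith)
      _ = 1 := Real.sqrt_one
  -- summability of coefficients
  have hA : Summable (fun k => ‖a k‖) := by
    rw [summable_norm_iff]
    have := (hf 1 (by norm_num)).summable
    simpa using this
  -- continuous family
  let F : ℕ → C(ℝ, ℂ) := fun k =>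
    ⟨fun t => a k * (B * ((1:ℂ) - (t:ℂ) * E)) ^ k, by fun_prop⟩
  have hFnorm : ∀ k, ‖(F k).restrict
      ((⟨Set.uIcc (0:ℝ) L, isCompact_uIcc⟩ : TopologicalSpace.Compacts ℝ) : Set ℝ)‖ ≤ ‖a k‖ := by
    intro k
    rw [ContinuousMap.norm_le _ (norm_nonneg (a k))]
    rintro ⟨x, hx⟩
    simp only [ContinuousMap.restrict_apply, ContinuousMap.coe_mk, F]
    rw [norm_mul]
    have := hbound x hx
    calc ‖a k‖ * ‖(B * ((1:ℂ) - (x:ℂ) * E)) ^ k‖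
        ≤ ‖a k‖ * 1 := by
          apply mul_le_mul_of_nonneg_left _ (norm_nonneg _)
          rw [norm_pow]
          exact pow_le_one₀ (norm_nonneg _) this
      _ = ‖a k‖ := mul_one _
  have hFsum : Summable fun k => ‖(F k).restrict
      ((⟨Set.uIcc (0:ℝ) L, isCompact_uIcc⟩ : TopologicalSpace.Compacts ℝ) : Set ℝ)‖ :=
    hA.of_nonneg_of_le (fun _ => norm_nonneg _) hFnorm
  have hsum : HasSum (fun k : ℕ => ∫ t in (0:ℝ)..L, F k t)
      (∫ t in (0:ℝ)..L, ∑' k : ℕ, F k t) :=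
    hasSum_intervalIntegral_of_summable_norm hFsum
  -- identify the integral of the sum
  have heq : (∫ t in (0:ℝ)..L, ∑' k : ℕ, F k t)
      = ∫ t in (0:ℝ)..L, f (B * ((1:ℂ) - (t:ℂ) * E)) := by
    apply intervalIntegral.integral_congr
    intro t ht
    exact (hf _ (hbound t ht)).tsum_eq
  -- per-term integral
  have hterm : ∀ k : ℕ, (∫ t in (0:ℝ)..L, F k t)
      = ((-1 : ℂ) ^ k * a k / ((k : ℂ) + 1)) * Complex.exp (Complex.I * (k : ℂ) * β) *
          (Complex.exp (Complex.I * (2 * (k : ℂ) + 1) * α) +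
            (-1 : ℂ) ^ k * Complex.exp (-Complex.I * α)) := by
    intro k
    have hk : ((k : ℂ) + 1) ≠ 0 := Nat.cast_add_one_ne_zero k
    set c : ℂ := -(a k * B ^ k) / (((k:ℂ) + 1) * E) with hcdef
    have hderiv : ∀ t : ℝ, HasDerivAt (fun s : ℝ => c * ((1:ℂ) - (s:ℂ) * E) ^ (k+1))
        (a k * (B * ((1:ℂ) - (t:ℂ) * E)) ^ k) t := by
      intro t
      have h1 : HasDerivAt (fun s : ℝ => ((s:ℝ):ℂ)) 1 t := by
        exact (hasDerivAt_id t).ofReal_comp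
      have h2 : HasDerivAt (fun s : ℝ => (1:ℂ) - (s:ℂ) * E) (-E) t := by
        simpa using (h1.mul_const E).const_sub 1
      have h3' : HasDerivAt (fun s : ℝ => ((1:ℂ) - (s:ℂ) * E) ^ (k+1))
          ((-E) • (((k+1 : ℕ) : ℂ) * ((1:ℂ) - (t:ℂ) * E) ^ (k+1-1))) t :=
        by convert HasDerivAt.scomp t (hasDerivAt_pow (k+1) _) h2 using 1 <;> rfl
      have h3 := h3'.const_mul c
      convert h3 using 1
      · rfl
      rw [hcdef, mul_pow, smul_eq_mul]
      simp only [Nat.add_sub_cancel]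
      push_cast
      field_simp
    have hint : (∫ t in (0:ℝ)..L, F k t)
        = c * ((1:ℂ) - (L:ℂ) * E) ^ (k+1) - c * ((1:ℂ) - (0:ℝ) * E) ^ (k+1) := by
      apply intervalIntegral.integral_eq_sub_of_hasDerivAt (fun t _ => hderiv t)
      apply Continuous.intervalIntegrable
      fun_prop
    rw [hint]
    have hend : (1:ℂ) - (L:ℂ) * E = -E^2 := by rw [hkey]; ring
    rw [hend]
    -- rewrite exponentials as powers
    have e1 : Complex.exp (Complex.I * (k : ℂ) * β) = B ^ k := by
      rw [hBdef, ← Complex.exp_nat_mul]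
      congr 1; ring
    have e2 : Complex.exp (Complex.I * (2 * (k : ℂ) + 1) * α) = E ^ (2*k+1) := by
      rw [hEdef, ← Complex.exp_nat_mul]
      congr 1; push_cast; ring
    have e3 : Complex.exp (-Complex.I * α) = E⁻¹ := by
      rw [hEdef, ← Complex.exp_neg]
      congr 1; ring
    rw [e1, e2, e3, hcdef]
    rw [neg_pow (E^2) (k+1), ← pow_mul, pow_succ (-1 : ℂ) k]
    field_simp
    ring_nf
    rw [show ((-1:ℂ))^(k*2) = 1 by rw [mul_comm, pow_mul, neg_one_sq, one_pow]]
    simp only [Complex.ofReal_zero]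
    ring
  rw [heq] at hsum
  have hfun : (fun k : ℕ => ∫ t in (0:ℝ)..L, F k t)
      = fun k : ℕ =>
        ((-1 : ℂ) ^ k * a k / ((k : ℂ) + 1)) * Complex.exp (Complex.I * (k : ℂ) * β) *
          (Complex.exp (Complex.I * (2 * (k : ℂ) + 1) * α) +
            (-1 : ℂ) ^ k * Complex.exp (-Complex.I * α)) := funext hterm
  rw [hfun] at hsum
  exact hsum
end

section
/- The operator C₊ = (1/2) A₋* H₊ A₋ acts diagonally on the basis vectors v_{p,q} = φ_{p,q} − (−1)^p φ_{p,p−q} of V₋ (indices p < 2q): C₊v_{p,q} = −i((sgn(2q) + sgn(2(p−q)))/2) v_{p,q}; in particular the eigenvalue is i if q<0 and p<q; −i if q>0 and p>q; i/2 if q=0 and p<0; −i/2 if q>0 and p=q; and 0 otherwise. -/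
open Real Complex MeasureTheory intervalIntegral

/-- `φ_{p,q}(β,α) = (1/(π√2)) e^{i(pβ+2qα)}`. -/
noncomputable def phiB (p q : ℤ) (β α : ℝ) : ℂ :=
  (1 / (π * Real.sqrt 2) : ℝ) * Complex.exp (Complex.I * (p * β + 2 * q * α))

/-- `v_{p,q} = φ_{p,q} − (−1)^p φ_{p,p−q}`. -/
noncomputable def vB (p q : ℤ) (β α : ℝ) : ℂ :=
  phiB p q β α - (-1 : ℂ) ^ p * phiB p (p - q) β α

/-- `k`-th fiberwise Fourier coefficient in the angular variable `α ∈ S¹`. -/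
noncomputable def fCoeff (w : ℝ → ℝ → ℂ) (β : ℝ) (k : ℤ) : ℂ :=
  (1 / (2 * π) : ℝ) * ∫ t in (0 : ℝ)..(2 * π), w β t * Complex.exp (-Complex.I * k * t)

/-- The fiberwise Hilbert transform restricted to even angular harmonics:
`e^{ikα} ↦ −i sgn(k) e^{ikα}` for even `k`, and `0` on odd harmonics. -/
noncomputable def Hplus (w : ℝ → ℝ → ℂ) (β α : ℝ) : ℂ :=
  ∑' k : ℤ,
    if Even k then
      -Complex.I * (Int.sign k : ℂ) * fCoeff w β k * Complex.exp (Complex.I * k * α)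
    else 0

/-- `C₊ = (1/2) A₋* H₊ A₋`: on `V₋`, the odd extension `A₋` with respect to the scattering
relation `S(β,α) = (β+π+2α, π−α)` of a `V₋` trigonometric expression is the same global
formula, and `A₋*g(β,α) = g(β,α) − g(S(β,α))`. -/
noncomputable def Cplus (w : ℝ → ℝ → ℂ) (β α : ℝ) : ℂ :=
  (1 / 2 : ℂ) * (Hplus w β α - Hplus w (β + π + 2 * α) (π - α))

lemma integral_exp_int (n : ℤ) :
    (∫ t in (0:ℝ)..(2*π), Complex.exp (Complex.I * (n:ℂ) * t)) =
      if n = 0 then ((2*π : ℝ) : ℂ) else 0 := by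
  rcases eq_or_ne n 0 with h | h
  · simp [h]
  · rw [if_neg h,
      integral_exp_mul_complex (mul_ne_zero Complex.I_ne_zero (Int.cast_ne_zero.mpr h))]
    have h1 : Complex.exp (Complex.I * (n:ℂ) * (2*(π:ℂ))) = 1 := by
      rw [show Complex.I * (n:ℂ) * (2*(π:ℂ)) = (n:ℂ) * (2*(π:ℂ)*Complex.I) by ring]
      exact Complex.exp_int_mul_two_pi_mul_I n
    push_cast
    rw [h1]
    simp

lemma fCoeff_exp (C : ℂ) (p m : ℤ) (β : ℝ) (k : ℤ) :
    fCoeff (fun b a => C * Complex.exp (Complex.I * ((p:ℂ)*(b:ℝ) + (m:ℂ)*(a:ℝ)))) β k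
      = if m = k then C * Complex.exp (Complex.I * ((p:ℂ)*(β:ℝ))) else 0 := by
  unfold fCoeff
  have h1 : ∀ t : ℝ,
      C * Complex.exp (Complex.I * ((p:ℂ)*(β:ℝ) + (m:ℂ)*(t:ℝ))) *
        Complex.exp (-Complex.I * (k:ℂ) * (t:ℝ))
      = (C * Complex.exp (Complex.I * ((p:ℂ)*(β:ℝ)))) *
          Complex.exp (Complex.I * ((m-k : ℤ):ℂ) * (t:ℝ)) := by
    intro t
    have harg : Complex.I * ((p:ℂ)*(β:ℝ) + (m:ℂ)*(t:ℝ)) + -Complex.I * (k:ℂ) * (t:ℝ)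
        = Complex.I * ((p:ℂ)*(β:ℝ)) + Complex.I * ((m-k : ℤ):ℂ) * (t:ℝ) := by
      push_cast; ring
    rw [mul_assoc, ← Complex.exp_add, harg, Complex.exp_add, ← mul_assoc]
  simp only [h1]
  rw [intervalIntegral.integral_const_mul, integral_exp_int (m - k)]
  have hπ : (π:ℂ) ≠ 0 := by exact_mod_cast Real.pi_ne_zero
  rcases eq_or_ne m k with h | h
  · rw [if_pos (by omega), if_pos h]
    push_cast
    field_simp
  · rw [if_neg (by omega), if_neg h, mul_zero, mul_zero]

lemma fCoeff_phiB (p m : ℤ) (β : ℝ) (k : ℤ) :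
    fCoeff (fun b a => phiB p m b a) β k
      = if 2*m = k then ((1 / (π * Real.sqrt 2) : ℝ):ℂ) *
          Complex.exp (Complex.I * ((p:ℂ)*(β:ℝ))) else 0 := by
  have h : (fun b a => phiB p m b a)
      = (fun b a => ((1 / (π * Real.sqrt 2) : ℝ):ℂ) *
          Complex.exp (Complex.I * ((p:ℂ)*(b:ℝ) + ((2*m : ℤ):ℂ)*(a:ℝ)))) := by
    funext b a
    unfold phiB
    push_cast
    ring_nf
  rw [h, fCoeff_exp]

lemma fCoeff_sub (w1 w2 : ℝ → ℝ → ℂ) (c : ℂ) (β : ℝ) (k : ℤ)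
    (h1 : Continuous (w1 β)) (h2 : Continuous (w2 β)) :
    fCoeff (fun b a => w1 b a - c * w2 b a) β k
      = fCoeff w1 β k - c * fCoeff w2 β k := by
  unfold fCoeff
  have key : ∀ t : ℝ, (w1 β t - c * w2 β t) * Complex.exp (-Complex.I * (k:ℂ) * (t:ℝ))
      = w1 β t * Complex.exp (-Complex.I * (k:ℂ) * (t:ℝ))
        - c * (w2 β t * Complex.exp (-Complex.I * (k:ℂ) * (t:ℝ))) := by
    intro t; ring
  simp only [key]
  have hE : Continuous (fun t : ℝ => Complex.exp (-Complex.I * (k:ℂ) * (t:ℝ))) := by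
    fun_prop
  rw [intervalIntegral.integral_sub
      (f := fun t : ℝ => w1 β t * Complex.exp (-Complex.I * (k:ℂ) * (t:ℝ)))
      (g := fun t : ℝ => c * (w2 β t * Complex.exp (-Complex.I * (k:ℂ) * (t:ℝ))))
      ((h1.mul hE).intervalIntegrable _ _)
      ((continuous_const.mul (h2.mul hE)).intervalIntegrable _ _),
    intervalIntegral.integral_const_mul]
  ring

lemma continuous_phiB (p m : ℤ) (β : ℝ) : Continuous (phiB p m β) := by
  unfold phiB
  fun_prop

lemma fCoeff_vB (p q : ℤ) (β : ℝ) (k : ℤ) :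
    fCoeff (fun b a => vB p q b a) β k
      = (if 2*q = k then ((1 / (π * Real.sqrt 2) : ℝ):ℂ) *
            Complex.exp (Complex.I * ((p:ℂ)*(β:ℝ))) else 0)
        - (-1:ℂ)^p * (if 2*(p-q) = k then ((1 / (π * Real.sqrt 2) : ℝ):ℂ) *
            Complex.exp (Complex.I * ((p:ℂ)*(β:ℝ))) else 0) := by
  have h : (fun b a => vB p q b a)
      = (fun b a => phiB p q b a - (-1:ℂ)^p * phiB p (p-q) b a) := by
    funext b a; rfl
  rw [h, fCoeff_sub _ _ _ _ _ (continuous_phiB p q β) (continuous_phiB p (p-q) β),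
    fCoeff_phiB, fCoeff_phiB]

lemma Hplus_vB (p q : ℤ) (hpq : p ≠ 2*q) (β α : ℝ) :
    Hplus (fun b a => vB p q b a) β α =
      -Complex.I * (Int.sign (2*q) : ℂ) * phiB p q β α
        - (-1:ℂ)^p * (-Complex.I * (Int.sign (2*(p-q)) : ℂ) * phiB p (p-q) β α) := by
  unfold Hplus
  set c : ℂ := ((1 / (π * Real.sqrt 2) : ℝ):ℂ) with hc
  have hsupp : ∀ k : ℤ, k ∉ ({2*q, 2*(p-q)} : Finset ℤ) →
      (if Even k then
        -Complex.I * (Int.sign k : ℂ) * fCoeff (fun b a => vB p q b a) β k *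
          Complex.exp (Complex.I * (k:ℂ) * (α:ℝ))
      else 0) = 0 := by
    intro k hk
    simp only [Finset.mem_insert, Finset.mem_singleton, not_or] at hk
    rcases Decidable.em (Even k) with he | he
    · rw [if_pos he, fCoeff_vB]
      rw [if_neg (by omega : ¬ (2*q : ℤ) = k), if_neg (by omega : ¬ (2*(p-q) : ℤ) = k)]
      ring
    · rw [if_neg he]
  rw [tsum_eq_sum hsupp, Finset.sum_pair (by omega : (2*q : ℤ) ≠ 2*(p-q))]
  rw [if_pos ⟨q, by ring⟩, if_pos ⟨p - q, by ring⟩, fCoeff_vB, fCoeff_vB]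
  rw [if_pos rfl, if_neg (by omega : ¬ (2*(p-q) : ℤ) = 2*q),
    if_neg (by omega : ¬ (2*q : ℤ) = 2*(p-q)), if_pos rfl]
  have e1 : c * Complex.exp (Complex.I * ((p:ℂ)*(β:ℝ))) *
      Complex.exp (Complex.I * ((2*q : ℤ):ℂ) * (α:ℝ)) = phiB p q β α := by
    rw [mul_assoc, ← Complex.exp_add]
    unfold phiB
    rw [← hc]
    push_cast
    ring_nf
  have e2 : c * Complex.exp (Complex.I * ((p:ℂ)*(β:ℝ))) *
      Complex.exp (Complex.I * ((2*(p-q) : ℤ):ℂ) * (α:ℝ)) = phiB p (p-q) β α := by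
    rw [mul_assoc, ← Complex.exp_add]
    unfold phiB
    rw [← hc]
    push_cast
    ring_nf
  rw [← e1, ← e2]
  ring

/-- The operator `C₊ = (1/2)A₋* H₊ A₋` acts diagonally on the basis vectors `v_{p,q}` of
`V₋` (`p < 2q`): `C₊v_{p,q} = −i((sgn(2q)+sgn(2(p−q)))/2) v_{p,q}`; in particular the
eigenvalue is `i` if `q<0, p<q`; `−i` if `q>0, p>q`; `i/2` if `q=0, p<0`; `−i/2` if
`q>0, p=q`; and `0` otherwise. -/
theorem Cplus_diagonal (p q : ℤ) (hpq : p < 2 * q) (β α : ℝ) :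
    (Cplus (fun b a => vB p q b a) β α =
        -Complex.I * (((Int.sign (2 * q) : ℂ) + (Int.sign (2 * (p - q)) : ℂ)) / 2) *
          vB p q β α) ∧
      Cplus (fun b a => vB p q b a) β α =
        if q < 0 ∧ p < q then Complex.I * vB p q β α
        else if 0 < q ∧ q < p then -Complex.I * vB p q β α
        else if q = 0 ∧ p < 0 then (Complex.I / 2) * vB p q β α
        else if 0 < q ∧ p = q then (-Complex.I / 2) * vB p q β α
        else 0 := by
  have hne : p ≠ 2*q := by omega
  have hneg : ((-1:ℂ))^p = Complex.exp ((p:ℂ) * ((π:ℂ) * Complex.I)) := by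
    rw [Complex.exp_int_mul, Complex.exp_pi_mul_I]
  have hε : ((-1:ℂ)^p) * ((-1:ℂ)^p) = 1 := by
    rw [← mul_zpow]; norm_num
  have e1 : phiB p q (β + π + 2*α) (π - α) = (-1:ℂ)^p * phiB p (p-q) β α := by
    unfold phiB
    rw [hneg]
    rw [show Complex.I * ((p:ℂ)*((β + π + 2*α : ℝ):ℂ) + 2*(q:ℂ)*((π - α : ℝ):ℂ))
        = ((p:ℂ) * ((π:ℂ) * Complex.I) +
            Complex.I * ((p:ℂ)*(β:ℝ) + 2*(((p-q : ℤ)):ℂ)*(α:ℝ)))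
          + (q:ℂ) * (2*(π:ℂ)*Complex.I) by push_cast; ring]
    rw [Complex.exp_add, Complex.exp_add, Complex.exp_int_mul_two_pi_mul_I q]
    push_cast
    ring
  have e2 : phiB p (p-q) (β + π + 2*α) (π - α) = (-1:ℂ)^p * phiB p q β α := by
    unfold phiB
    rw [hneg]
    rw [show Complex.I * ((p:ℂ)*((β + π + 2*α : ℝ):ℂ) + 2*(((p-q:ℤ)):ℂ)*((π - α : ℝ):ℂ))
        = ((p:ℂ) * ((π:ℂ) * Complex.I) +
            Complex.I * ((p:ℂ)*(β:ℝ) + 2*(q:ℂ)*(α:ℝ)))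
          + ((p-q : ℤ):ℂ) * (2*(π:ℂ)*Complex.I) by push_cast; ring]
    rw [Complex.exp_add, Complex.exp_add, Complex.exp_int_mul_two_pi_mul_I (p-q)]
    push_cast
    ring
  have hmain : Cplus (fun b a => vB p q b a) β α =
      -Complex.I * (((Int.sign (2 * q) : ℂ) + (Int.sign (2 * (p - q)) : ℂ)) / 2) *
        vB p q β α := by
    unfold Cplus
    rw [Hplus_vB p q hne β α, Hplus_vB p q hne (β + π + 2*α) (π - α), e1, e2]
    unfold vB
    linear_combination
      (-(Complex.I * (Int.sign (2*(p-q)) : ℂ) * phiB p q β α)/2) * hε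
  refine ⟨hmain, ?_⟩
  rw [hmain]
  rcases lt_trichotomy q 0 with hq | hq | hq
  · have h1 : (Int.sign (2*q) : ℤ) = -1 := Int.sign_eq_neg_one_iff_neg.mpr (by omega)
    have h2 : (Int.sign (2*(p-q)) : ℤ) = -1 := Int.sign_eq_neg_one_iff_neg.mpr (by omega)
    rw [if_pos ⟨hq, by omega⟩, h1, h2]
    push_cast
    ring
  · have h1 : (Int.sign (2*q) : ℤ) = 0 := by rw [hq]; rfl
    have h2 : (Int.sign (2*(p-q)) : ℤ) = -1 := Int.sign_eq_neg_one_iff_neg.mpr (by omega)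
    rw [if_neg (by omega), if_neg (by omega), if_pos ⟨hq, by omega⟩, h1, h2]
    push_cast
    ring
  · have h1 : (Int.sign (2*q) : ℤ) = 1 := Int.sign_eq_one_iff_pos.mpr (by omega)
    rcases lt_trichotomy p q with hp | hp | hp
    · have h2 : (Int.sign (2*(p-q)) : ℤ) = -1 := Int.sign_eq_neg_one_iff_neg.mpr (by omega)
      rw [if_neg (by omega), if_neg (by omega), if_neg (by omega), if_neg (by omega),
        h1, h2]
      push_cast
      ring
    · have h2 : (Int.sign (2*(p-q)) : ℤ) = 0 := by rw [hp]; simp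
      rw [if_neg (by omega), if_neg (by omega), if_neg (by omega), if_pos ⟨hq, hp⟩,
        h1, h2]
      push_cast
      ring
    · have h2 : (Int.sign (2*(p-q)) : ℤ) = 1 := Int.sign_eq_one_iff_pos.mpr (by omega)
      rw [if_neg (by omega), if_pos ⟨hq, hp⟩, h1, h2]
      push_cast
      ring
end
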